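/- Let G be a graph with clique number at most w ≥ 2. Suppose K is a maximum clique of G and for each v ∈ K set P_v := V(G) \ (K ∪ N_G(v)). If G is connected and not complete, then there exists v ∈ K with χ(P_v) ≥ w^{-1}·χ(G); consequently G contains an anticomplete pair (P,Q) of nonempty sets with G[P], G[Q] connected and χ(P) ≥ w^{-1}·χ(G). -/

import Mathlib

open SimpleGraph

/-- The chromatic number of the subgraph of `G` induced on `S`, as a natural number. -/
noncomputable def chiSet {V : Type*} (G : SimpleGraph V) (S : Set V) : ℕ :=
  (G.induce S).chromaticNumber.toNat

/-- The chromatic number of `G`, as a natural number. -/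
noncomputable def chi {V : Type*} (G : SimpleGraph V) : ℕ :=
  G.chromaticNumber.toNat

/-- `(A, B)` is an anticomplete pair: no edge of `G` joins `A` and `B`. -/
def Anticomplete {V : Type*} (G : SimpleGraph V) (A B : Set V) : Prop :=
  ∀ a ∈ A, ∀ b ∈ B, ¬ G.Adj a b

/-- `G` is `H`-free: no induced subgraph of `G` is isomorphic to `H`. -/
def FreeOf {V W : Type*} (G : SimpleGraph V) (H : SimpleGraph W) : Prop :=
  IsEmpty (H ↪g G)

lemma chiSet_le_of_colorable {V : Type*} {G : SimpleGraph V} {S : Set V} {n : ℕ}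
    (h : (G.induce S).Colorable n) : chiSet G S ≤ n :=
  ENat.toNat_le_of_le_coe (chromaticNumber_le_iff_colorable.mpr h)

lemma chi_le_of_colorable {V : Type*} {G : SimpleGraph V} {n : ℕ}
    (h : G.Colorable n) : chi G ≤ n :=
  ENat.toNat_le_of_le_coe (chromaticNumber_le_iff_colorable.mpr h)

lemma colorable_induce_chiSet {V : Type*} [Fintype V] (G : SimpleGraph V) (S : Set V) :
    (G.induce S).Colorable (chiSet G S) :=
  colorable_chromaticNumber_of_fintype _

lemma colorable_union {V : Type*} (G : SimpleGraph V) {A B : Set V} {n : ℕ}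
    (hA : (G.induce A).Colorable n) (hB : (G.induce B).Colorable n)
    (hAB : ∀ a ∈ A, ∀ b ∈ B, ¬ G.Adj a b) :
    (G.induce (A ∪ B)).Colorable n := by
  classical
  obtain ⟨cA⟩ := hA
  obtain ⟨cB⟩ := hB
  refine ⟨Coloring.mk
    (fun x => if hx : (x : V) ∈ A then cA ⟨x, hx⟩ else cB ⟨x, x.2.resolve_left hx⟩) ?_⟩
  rintro ⟨x, hx⟩ ⟨y, hy⟩ hadj
  have hxy : G.Adj x y := hadj
  by_cases hxA : x ∈ A <;> by_cases hyA : y ∈ A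
  · simp only [dif_pos hxA, dif_pos hyA]
    exact cA.valid hxy
  · exact absurd hxy (hAB x hxA y (hy.resolve_left hyA))
  · exact absurd hxy.symm (hAB y hyA x (hx.resolve_left hxA))
  · simp only [dif_neg hxA, dif_neg hyA]
    exact cB.valid hxy

/-- Every nonempty set contains a nonempty subset inducing a connected subgraph whose
chromatic number is at least that of the whole set. -/
lemma exists_connected_core {V : Type*} [Fintype V] (G : SimpleGraph V) :
    ∀ (n : ℕ) (S : Set V), S.ncard ≤ n → S.Nonempty →
      ∃ P, P ⊆ S ∧ P.Nonempty ∧ (G.induce P).Connected ∧ chiSet G S ≤ chiSet G P := by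
  intro n
  induction n with
  | zero =>
      intro S hcard hne
      have := Set.ncard_pos (S.toFinite) |>.mpr hne
      omega
  | succ n ih =>
      intro S hcard hne
      by_cases hc : (G.induce S).Connected
      · exact ⟨S, subset_rfl, hne, hc, le_rfl⟩
      · have hne' : Nonempty ↥S := hne.to_subtype
        have hpre : ¬ (G.induce S).Preconnected := fun h => hc ⟨h⟩
        rw [SimpleGraph.Preconnected] at hpre
        push_neg at hpre
        obtain ⟨x, y, hxy⟩ := hpre
        set A : Set V := Subtype.val '' {z : ↥S | (G.induce S).Reachable x z} with hAdef
        set B : Set V := S \ A with hBdef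
        have hAS : A ⊆ S := by
          rintro a ⟨z, _, rfl⟩; exact z.2
        have hxA : (x : V) ∈ A := ⟨x, Reachable.refl x, rfl⟩
        have hyB : (y : V) ∈ B := by
          refine ⟨y.2, ?_⟩
          rintro ⟨z, hz, hzy⟩
          exact hxy (Subtype.ext hzy ▸ hz)
        have hanti : ∀ a ∈ A, ∀ b ∈ B, ¬ G.Adj a b := by
          rintro a ⟨z, hz, rfl⟩ b ⟨hbS, hbA⟩ hadj
          have : (G.induce S).Adj z ⟨b, hbS⟩ := hadj
          exact hbA ⟨⟨b, hbS⟩, hz.trans this.reachable, rfl⟩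
        have hunion : A ∪ B = S := Set.union_diff_cancel hAS
        have hAne : A.Nonempty := ⟨x, hxA⟩
        have hBne : B.Nonempty := ⟨y, hyB⟩
        have hAlt : A.ncard < S.ncard := by
          refine Set.ncard_lt_ncard ⟨hAS, fun h => hyB.2 (h hyB.1)⟩ S.toFinite
        have hBlt : B.ncard < S.ncard := by
          refine Set.ncard_lt_ncard ⟨Set.diff_subset, fun h => ?_⟩ S.toFinite
          exact (h (hAS hxA)).2 hxA
        obtain ⟨PA, hPAsub, hPAne, hPAconn, hPAchi⟩ := ih A (by omega) hAne
        obtain ⟨PB, hPBsub, hPBne, hPBconn, hPBchi⟩ := ih B (by omega) hBne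
        have hSle : chiSet G S ≤ max (chiSet G A) (chiSet G B) := by
          have hA' : (G.induce A).Colorable (max (chiSet G A) (chiSet G B)) :=
            (colorable_induce_chiSet G A).mono (le_max_left _ _)
          have hB' : (G.induce B).Colorable (max (chiSet G A) (chiSet G B)) :=
            (colorable_induce_chiSet G B).mono (le_max_right _ _)
          have := colorable_union G hA' hB' hanti
          rw [hunion] at this
          exact chiSet_le_of_colorable this
        by_cases hcase : chiSet G B ≤ chiSet G A
        · refine ⟨PA, hPAsub.trans hAS, hPAne, hPAconn, ?_⟩
          calc chiSet G S ≤ max (chiSet G A) (chiSet G B) := hSle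
            _ = chiSet G A := max_eq_left hcase
            _ ≤ chiSet G PA := hPAchi
        · refine ⟨PB, hPBsub.trans Set.diff_subset, hPBne, hPBconn, ?_⟩
          calc chiSet G S ≤ max (chiSet G A) (chiSet G B) := hSle
            _ = chiSet G B := max_eq_right (le_of_not_ge hcase)
            _ ≤ chiSet G PB := hPBchi

/-- Let `G` be connected, not complete, with clique number at most
`w ≥ 2`, and let `K` be a maximum clique of `G` with `P_v := V(G) \ (K ∪ N_G(v))` for
`v ∈ K`. Then some `v ∈ K` has `χ(P_v) ≥ w⁻¹·χ(G)`; consequently `G` contains an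
anticomplete pair `(P, Q)` of nonempty sets with `G[P]`, `G[Q]` connected and
`χ(P) ≥ w⁻¹·χ(G)`. -/
theorem stmt_15 {V : Type*} [Fintype V] (w : ℕ) (hw : 2 ≤ w) (G : SimpleGraph V)
    (hconn : G.Connected) (hnotcomplete : ∃ a b : V, a ≠ b ∧ ¬ G.Adj a b)
    (hclique : G.CliqueFree (w + 1)) (K : Finset V) (hK : G.IsClique ↑K)
    (hKmax : ∀ K' : Finset V, G.IsClique ↑K' → K'.card ≤ K.card) :
    (∃ v ∈ K, chi G ≤ w * chiSet G (Set.univ \ (↑K ∪ G.neighborSet v))) ∧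
      ∃ P Q : Set V, P.Nonempty ∧ Q.Nonempty ∧ Anticomplete G P Q ∧
        (G.induce P).Connected ∧ (G.induce Q).Connected ∧
        chi G ≤ w * chiSet G P := by
  classical
  set Pset : V → Set V := fun v => Set.univ \ (↑K ∪ G.neighborSet v) with hPsetdef
  obtain ⟨a, b, hab, hnadj⟩ := hnotcomplete
  -- K.card ≤ w
  have hKw : K.card ≤ w := by
    by_contra h
    push_neg at h
    obtain ⟨t, hts, htc⟩ := Finset.exists_subset_card_eq (show w + 1 ≤ K.card by omega)
    exact hclique t ⟨hK.subset (by exact_mod_cast hts), htc⟩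
  -- K is nonempty
  have hK1 : 1 ≤ K.card := by
    have := hKmax {a} (by simp)
    simpa using this
  have hKne : K.Nonempty := Finset.card_pos.mp hK1
  -- covering: every vertex outside K lies in some P_v
  have hcover : ∀ x : V, x ∉ K → ∃ v ∈ K, x ∈ Pset v := by
    intro x hx
    by_contra h
    push_neg at h
    have hadjall : ∀ v ∈ K, G.Adj v x := by
      intro v hv
      have := h v hv
      simp only [hPsetdef, Set.mem_diff, Set.mem_univ, true_and, not_not,
        Set.mem_union, mem_neighborSet] at this
      rcases this with h1 | h2
      · exact absurd h1 (by simpa using hx)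
      · exact h2
    have hclique' : G.IsClique ↑(insert x K) := by
      rw [Finset.coe_insert]
      exact hK.insert fun b hb hne => (hadjall b hb).symm
    have := hKmax (insert x K) hclique'
    rw [Finset.card_insert_of_notMem hx] at this
    omega
  -- choose v* maximizing chiSet of P_v
  obtain ⟨vs, hvsK, hmax⟩ := K.exists_max_image (fun v => chiSet G (Pset v)) hKne
  set m := chiSet G (Pset vs) with hmdef
  -- m ≥ 1
  have hm1 : 1 ≤ m := by
    have hxout : ∃ x : V, x ∉ K := by
      by_contra h
      push_neg at h
      exact hnadj (hK (h a) (h b) hab)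
    obtain ⟨x, hx⟩ := hxout
    obtain ⟨v0, hv0K, hxP⟩ := hcover x hx
    have hne0 : (Pset v0).Nonempty := ⟨x, hxP⟩
    have h1 : 1 ≤ chiSet G (Pset v0) := by
      by_contra h
      push_neg at h
      interval_cases h' : chiSet G (Pset v0)
      · have hcol := colorable_induce_chiSet G (Pset v0)
        rw [h'] at hcol
        obtain ⟨c⟩ := hcol
        have : Nonempty ↥(Pset v0) := hne0.to_subtype
        exact (Fin.elim0 (c this.some))
    exact h1.trans (hmax v0 hv0K)
  -- no vertex of P_v is adjacent to v
  have hnoadj : ∀ v x, x ∈ Pset v → ¬ G.Adj v x := by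
    intro v x hx
    simp only [hPsetdef, Set.mem_diff, Set.mem_univ, true_and, Set.mem_union,
      mem_neighborSet, not_or] at hx
    exact hx.2
  -- colorings of P_v with m colors, as total functions
  have hcol : ∀ v : V, ∃ f : V → Fin m, v ∈ K →
      ∀ x y, x ∈ Pset v → y ∈ Pset v → G.Adj x y → f x ≠ f y := by
    intro v
    by_cases hv : v ∈ K
    · have h1 : (G.induce (Pset v)).Colorable m :=
        (colorable_induce_chiSet G (Pset v)).mono (hmax v hv)
      obtain ⟨c⟩ := h1
      refine ⟨fun x => if hx : x ∈ Pset v then c ⟨x, hx⟩ else ⟨0, hm1⟩, fun _ x y hx hy hadj => ?_⟩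
      simp only [dif_pos hx, dif_pos hy]
      exact c.valid (show (G.induce (Pset v)).Adj ⟨x, hx⟩ ⟨y, hy⟩ from hadj)
    · exact ⟨fun _ => ⟨0, hm1⟩, fun h => absurd h hv⟩
  choose g hg using hcol
  -- covering function, total
  have hcov' : ∀ x : V, ∃ v : V, x ∉ K → v ∈ K ∧ x ∈ Pset v := by
    intro x
    by_cases hx : x ∈ K
    · exact ⟨x, fun h => absurd hx h⟩
    · obtain ⟨v, hv, hxv⟩ := hcover x hx
      exact ⟨v, fun _ => ⟨hv, hxv⟩⟩
  choose vf hvf using hcov'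
  -- the global coloring
  have hcolG : G.Colorable (K.card * m) := by
    have c : G.Coloring ({x // x ∈ K} × Fin m) := by
      refine Coloring.mk
        (fun x => if hx : x ∈ K then (⟨x, hx⟩, ⟨0, hm1⟩)
          else (⟨vf x, (hvf x hx).1⟩, g (vf x) x)) ?_
      intro x y hadj heq
      by_cases hx : x ∈ K <;> by_cases hy : y ∈ K
      · rw [dif_pos hx, dif_pos hy] at heq
        exact hadj.ne (congrArg (fun p => (p.1 : V)) heq)
      · rw [dif_pos hx, dif_neg hy] at heq
        have h1 : x = vf y := congrArg (fun p => (p.1 : V)) heq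
        exact hnoadj (vf y) y (hvf y hy).2 (h1 ▸ hadj)
      · rw [dif_neg hx, dif_pos hy] at heq
        have h1 : vf x = y := congrArg (fun p => (p.1 : V)) heq
        exact hnoadj (vf x) x (hvf x hx).2 (h1 ▸ hadj.symm)
      · rw [dif_neg hx, dif_neg hy] at heq
        have h1 : vf x = vf y := congrArg (fun p => (p.1 : V)) heq
        have h2 : g (vf x) x = g (vf y) y := congrArg Prod.snd heq
        rw [h1] at h2
        have hxP : x ∈ Pset (vf y) := h1 ▸ (hvf x hx).2
        exact hg (vf y) (hvf y hy).1 x y hxP (hvf y hy).2 hadj h2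
    have := c.colorable
    rwa [Fintype.card_prod, Fintype.card_coe, Fintype.card_fin] at this
  have hchi : chi G ≤ w * m := by
    have := chi_le_of_colorable hcolG
    calc chi G ≤ K.card * m := this
      _ ≤ w * m := Nat.mul_le_mul_right m hKw
  -- P_{v*} is nonempty
  have hPvs : (Pset vs).Nonempty := by
    by_contra h
    rw [Set.not_nonempty_iff_eq_empty] at h
    have : m = 0 := by
      rw [hmdef, h]
      have : IsEmpty ↥(∅ : Set V) := by simp
      simp [chiSet, chromaticNumber_eq_zero_of_isEmpty]
    omega
  obtain ⟨P, hPsub, hPne, hPconn, hPchi⟩ :=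
    exists_connected_core G ((Pset vs).ncard) (Pset vs) le_rfl hPvs
  have hQconn : (G.induce ({vs} : Set V)).Connected := by
    rw [connected_iff]
    refine ⟨fun u v => ?_, ⟨⟨vs, rfl⟩⟩⟩
    have huv : u = v := Subtype.ext ((Set.mem_singleton_iff.mp u.2).trans
      (Set.mem_singleton_iff.mp v.2).symm)
    rw [huv]
  refine ⟨⟨vs, hvsK, hchi⟩, P, {vs}, hPne, ⟨vs, rfl⟩, ?_, hPconn, hQconn, ?_⟩
  · intro p hp q hq hadj
    rw [Set.mem_singleton_iff] at hq
    rw [hq] at hadj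
    exact hnoadj vs p (hPsub hp) hadj.symm
  · calc chi G ≤ w * m := hchi
      _ ≤ w * chiSet G P := Nat.mul_le_mul_left w hPchi
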